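/- Let P be a vector space over ℚ, let x₁, …, x_r ∈ P, let b₁, …, b_m ∈ ℚ, and let A be an r×m matrix with rational entries. Suppose λ₁, …, λ_r are nonnegative real numbers with (λ₁, …, λ_r)·A = (b₁, …, b_m), and suppose x := λ₁x₁ + ⋯ + λ_r x_r lies in P. Then there exist nonnegative rationals λ′₁, …, λ′_r such that x = λ′₁x₁ + ⋯ + λ′_r x_r and (λ′₁, …, λ′_r)·A = (b₁, …, b_m). Moreover, if all λ_i are positive, the λ′_i can be chosen positive. -/

import Mathlib

open TensorProduct

set_option maxHeartbeats 1000000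
set_option synthInstance.maxHeartbeats 400000
open TensorProduct

lemma one_tmul_inj (V : Type*) [AddCommGroup V] [Module ℚ V] :
    Function.Injective (fun v : V => ((1:ℝ) ⊗ₜ[ℚ] v : ℝ ⊗[ℚ] V)) := by
  intro v v' h
  let b := Module.Basis.ofVectorSpace ℚ V
  have := fun i => congrArg (fun z => (b.baseChange ℝ).repr z i) h
  simp only [Module.Basis.baseChange_repr_tmul, Rat.smul_one_eq_cast, Rat.cast_injective.eq_iff] at this
  apply b.repr.injective
  ext i
  exact this i

theorem core {W : Type*} [AddCommGroup W] [Module ℚ W] {ι : Type*} [Fintype ι]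
    [DecidableEq ι]
    (f : ι → W) (w : W) (lam : ι → ℝ) (hlam : ∀ i, 0 < lam i)
    (hp : ((1:ℝ) ⊗ₜ[ℚ] w : ℝ ⊗[ℚ] W) = ∑ i, lam i • ((1:ℝ) ⊗ₜ[ℚ] f i : ℝ ⊗[ℚ] W)) :
    ∃ lam' : ι → ℚ, (∀ i, 0 < lam' i) ∧ w = ∑ i, lam' i • f i := by
  classical
  -- Step A : w lies in the rational span of the f i
  have hw : w ∈ Submodule.span ℚ (Set.range f) := by
    set N := Submodule.span ℚ (Set.range f) with hN
    have h0 : ((1:ℝ) ⊗ₜ[ℚ] (N.mkQ w) : ℝ ⊗[ℚ] (W ⧸ N)) = (1:ℝ) ⊗ₜ[ℚ] (0 : W ⧸ N) := by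
      have h1 := congrArg (LinearMap.baseChange ℝ N.mkQ) hp
      simp only [LinearMap.baseChange_tmul, map_sum, map_smul] at h1
      have h2 : ∀ i, N.mkQ (f i) = 0 := fun i =>
        (Submodule.Quotient.mk_eq_zero N).mpr (Submodule.subset_span ⟨i, rfl⟩)
      simp only [Submodule.mkQ_apply] at h1 h2 ⊢
      simp [h1, h2]
    have := one_tmul_inj (W ⧸ N) h0
    rwa [← Submodule.Quotient.mk_eq_zero, ← Submodule.mkQ_apply]
  obtain ⟨mu, hmu⟩ := (Submodule.mem_span_range_iff_exists_fun ℚ).mp hw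
  -- the linear combination map
  set T : (ι → ℚ) →ₗ[ℚ] W := Fintype.linearCombination ℚ f with hT
  have hTapp : ∀ c : ι → ℚ, T c = ∑ i, c i • f i := fun c =>
    Fintype.linearCombination_apply ℚ f c
  set K := LinearMap.ker T with hK
  obtain ⟨S, hSspan⟩ := IsNoetherian.noetherian K
  -- Step D : Δ lies in the kernel of the base change of T
  set δ : ι → ℝ := fun i => lam i - (mu i : ℝ) with hδ
  set Δ : ℝ ⊗[ℚ] (ι → ℚ) := ∑ i, (δ i) ⊗ₜ[ℚ] Pi.single i (1:ℚ) with hΔ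
  have hTsingle : ∀ i, T (Pi.single i (1:ℚ)) = f i := by
    intro i
    rw [hTapp]
    simp [Pi.single_apply, ite_smul]
  have hTΔ : T.baseChange ℝ Δ = 0 := by
    rw [hΔ, map_sum]
    simp only [LinearMap.baseChange_tmul, hTsingle]
    have : ∀ i, (δ i) ⊗ₜ[ℚ] f i
        = lam i • ((1:ℝ) ⊗ₜ[ℚ] f i) - (1:ℝ) ⊗ₜ[ℚ] (mu i • f i) := by
      intro i
      rw [hδ]
      rw [sub_tmul]
      congr 1
      · rw [smul_tmul', smul_eq_mul, mul_one]
      · rw [← Rat.smul_one_eq_cast ℝ (mu i), smul_tmul]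
    simp only [this, Finset.sum_sub_distrib, ← hp, ← tmul_sum, hmu, sub_self, tmul_zero]
  -- Step E : the kernel of the base change is the base change of the kernel
  have hker : Δ ∈ K.baseChange ℝ := by
    have heq : ∀ z, T.baseChange ℝ z = AlgebraTensorModule.lTensor ℝ ℝ T z := by
      intro z
      induction z using TensorProduct.induction_on with
      | zero => simp
      | tmul a n => simp
      | add a b ha hb => simp [map_add, ha, hb]
    have h1 : AlgebraTensorModule.lTensor ℝ ℝ T Δ = 0 := by rw [← heq]; exact hTΔ
    have h2 : Δ ∈ LinearMap.ker (AlgebraTensorModule.lTensor ℝ ℝ T) := h1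
    rw [Module.Flat.ker_lTensor_eq ℝ ℝ T] at h2
    obtain ⟨y, hy⟩ := h2
    rw [← hy]
    clear hy
    induction y using TensorProduct.induction_on with
    | zero => simp
    | tmul a k => simpa using Submodule.tmul_mem_baseChange_of_mem a k.2
    | add a b ha hb => rw [map_add]; exact Submodule.add_mem _ ha hb
  -- Step F : transfer through piScalarRight
  set g : (ι → ℚ) → (ι → ℝ) := fun c j => ((c j : ℚ) : ℝ) with hg
  have hginj : Function.Injective g := fun a b h => funext fun j =>
    Rat.cast_injective (congrFun h j)
  set e := TensorProduct.piScalarRight ℚ ℝ ℝ ι with he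
  have heΔ : e Δ = δ := by
    funext j
    rw [hΔ, map_sum, Finset.sum_apply]
    simp [he, Pi.single_apply, ite_smul]
  have hδmem : δ ∈ Submodule.span ℝ (g '' ↑S) := by
    have h1 : Δ ∈ Submodule.span ℝ (TensorProduct.mk ℚ ℝ (ι → ℚ) 1 '' ↑S) := by
      rw [← hSspan, Submodule.baseChange_span] at hker
      exact hker
    have h2 := Submodule.apply_mem_span_image_of_mem_span (e.toLinearMap) h1
    have himg : (⇑e.toLinearMap) '' ((TensorProduct.mk ℚ ℝ (ι → ℚ)) 1 '' ↑S) = g '' ↑S := by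
      rw [Set.image_image]
      apply Set.image_congr
      intro c _
      funext j
      simp [he, hg, Rat.smul_one_eq_cast]
    rw [himg] at h2
    simp only [LinearEquiv.coe_coe] at h2
    rwa [heΔ] at h2
  rw [show (g '' ↑S : Set (ι → ℝ)) = ↑(S.image g) by rw [Finset.coe_image]] at hδmem
  obtain ⟨c, -, hc⟩ := Submodule.mem_span_finset.mp hδmem
  rw [Finset.sum_image (fun x _ y _ h => hginj h)] at hc
  have hδeq : ∀ i, δ i = ∑ u ∈ S, c (g u) * (u i : ℝ) := by
    intro i
    have h6 := congrFun hc i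
    rw [Finset.sum_apply] at h6
    simp only [Pi.smul_apply, smul_eq_mul, hg] at h6
    exact h6.symm
  have hTS : ∀ u ∈ S, T u = 0 := by
    intro u hu
    have : u ∈ K := hSspan ▸ Submodule.subset_span hu
    exact this
  -- Step G : rational approximation
  rcases isEmpty_or_nonempty ι with hempty | hne
  · refine ⟨fun _ => 1, fun i => one_pos, ?_⟩
    rw [Finset.univ_eq_empty] at hmu ⊢
    simpa using hmu.symm
  set ε : ℝ := Finset.univ.inf' Finset.univ_nonempty lam with hε
  have hεpos : 0 < ε := by
    rw [hε, Finset.lt_inf'_iff]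
    exact fun i _ => hlam i
  set B : ℝ := 1 + ∑ u ∈ S, ‖g u‖ with hB
  have hsumB : ∑ u ∈ S, ‖g u‖ < B := by rw [hB]; linarith
  have hBpos : 0 < B := by
    rw [hB]
    have : (0:ℝ) ≤ ∑ u ∈ S, ‖g u‖ := Finset.sum_nonneg fun u _ => norm_nonneg _
    linarith
  choose q hq using fun u : ι → ℚ => exists_rat_near (c (g u)) (div_pos hεpos hBpos)
  refine ⟨fun i => mu i + ∑ u ∈ S, q u * u i, ?_, ?_⟩
  · intro i
    have key : |lam i - ((mu i : ℝ) + ∑ u ∈ S, (q u : ℝ) * (u i : ℝ))| < ε := by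
      have h1 : lam i = (mu i : ℝ) + δ i := by rw [hδ]; ring
      have h2 : lam i - ((mu i : ℝ) + ∑ u ∈ S, (q u : ℝ) * (u i : ℝ))
          = ∑ u ∈ S, (c (g u) - (q u : ℝ)) * (u i : ℝ) := by
        rw [h1, hδeq i]
        have h7 : ∀ u ∈ S, (c (g u) - (q u : ℝ)) * (u i : ℝ)
            = c (g u) * (u i : ℝ) - (q u : ℝ) * (u i : ℝ) := fun u _ => by ring
        rw [Finset.sum_congr rfl h7, Finset.sum_sub_distrib]
        ring
      rw [h2]
      calc |∑ u ∈ S, (c (g u) - (q u : ℝ)) * (u i : ℝ)|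
          ≤ ∑ u ∈ S, |(c (g u) - (q u : ℝ)) * (u i : ℝ)| := Finset.abs_sum_le_sum_abs _ _
        _ ≤ ∑ u ∈ S, (ε / B) * ‖g u‖ := by
            apply Finset.sum_le_sum
            intro u hu
            rw [abs_mul]
            have h3 : |(u i : ℝ)| ≤ ‖g u‖ := by
              have := norm_le_pi_norm (g u) i
              rwa [Real.norm_eq_abs] at this
            exact mul_le_mul (le_of_lt (hq u)) h3 (abs_nonneg _)
              (le_of_lt (div_pos hεpos hBpos))
        _ = (ε / B) * ∑ u ∈ S, ‖g u‖ := by rw [Finset.mul_sum]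
        _ < (ε / B) * B := by
            exact mul_lt_mul_of_pos_left hsumB (div_pos hεpos hBpos)
        _ = ε := by field_simp
    have hεle : ε ≤ lam i := Finset.inf'_le lam (Finset.mem_univ i)
    have : (0:ℝ) < (mu i : ℝ) + ∑ u ∈ S, (q u : ℝ) * (u i : ℝ) := by
      have := abs_lt.mp key
      linarith
    have hcast : ((mu i + ∑ u ∈ S, q u * u i : ℚ) : ℝ)
        = (mu i : ℝ) + ∑ u ∈ S, (q u : ℝ) * (u i : ℝ) := by push_cast; ring
    exact_mod_cast hcast ▸ this
  · have h4 : ∑ i, (∑ u ∈ S, q u * u i) • f i = 0 := by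
      have h5 : ∀ i, (∑ u ∈ S, q u * u i) • f i = ∑ u ∈ S, q u • ((u i) • f i) := by
        intro i
        rw [Finset.sum_smul]
        exact Finset.sum_congr rfl fun u _ => mul_smul _ _ _
      rw [Finset.sum_congr rfl fun i _ => h5 i, Finset.sum_comm]
      apply Finset.sum_eq_zero
      intro u hu
      rw [← Finset.smul_sum, ← hTapp, hTS u hu, smul_zero]
    rw [Finset.sum_congr rfl fun i _ => add_smul (mu i) _ (f i),
      Finset.sum_add_distrib, hmu, h4, add_zero]

lemma sum_subtype_of_zero {α β : Type*} [Fintype α] [AddCommMonoid β]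
    (p : α → Prop) [DecidablePred p] (t : α → β) (h : ∀ i, ¬ p i → t i = 0) :
    ∑ i, t i = ∑ i : Subtype p, t i.1 := by
  rw [← Finset.sum_subtype (Finset.univ.filter p) (by simp) t]
  exact (Finset.sum_filter_of_ne (fun x _ hx => by
    by_contra hp
    exact hx (h x hp))).symm

theorem rational_combination_of_real (P : Type*) [AddCommGroup P] [Module ℚ P]
    (r m : ℕ) (x : Fin r → P) (b : Fin m → ℚ) (A : Matrix (Fin r) (Fin m) ℚ)
    (lam : Fin r → ℝ) (hlam : ∀ i, 0 ≤ lam i)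
    (hA : ∀ j, ∑ i, lam i * (A i j : ℝ) = (b j : ℝ))
    (p : P)
    (hp : ((1 : ℝ) ⊗ₜ[ℚ] p : ℝ ⊗[ℚ] P) = ∑ i, lam i • ((1 : ℝ) ⊗ₜ[ℚ] x i : ℝ ⊗[ℚ] P)) :
    ∃ lam' : Fin r → ℚ, (∀ i, 0 ≤ lam' i) ∧
      ((∀ i, 0 < lam i) → ∀ i, 0 < lam' i) ∧
      p = ∑ i, lam' i • x i ∧ ∀ j, ∑ i, lam' i * A i j = b j := by
  classical
  have hzero : ∀ i : Fin r, ¬ 0 < lam i → lam i = 0 :=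
    fun i hi => le_antisymm (not_lt.mp hi) (hlam i)
  set F : {i : Fin r // 0 < lam i} → ((Fin m → ℚ) × P) :=
    fun i => (fun j => A i.1 j, x i.1) with hF
  set lam0 : {i : Fin r // 0 < lam i} → ℝ := fun i => lam i.1 with hlam0
  -- the matrix conditions, restricted to the positive coordinates
  have hAsub : ∀ j, ∑ i : {i : Fin r // 0 < lam i}, lam0 i * (A i.1 j : ℝ) = (b j : ℝ) := by
    intro j
    rw [← sum_subtype_of_zero (fun i => 0 < lam i) (fun i => lam i * (A i j : ℝ))
      (fun i hi => by beta_reduce; rw [hzero i hi, zero_mul])]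
    exact hA j
  have hpsub : ((1 : ℝ) ⊗ₜ[ℚ] p : ℝ ⊗[ℚ] P)
      = ∑ i : {i : Fin r // 0 < lam i}, lam0 i • ((1 : ℝ) ⊗ₜ[ℚ] x i.1 : ℝ ⊗[ℚ] P) := by
    rw [hp]
    exact sum_subtype_of_zero (fun i => 0 < lam i)
      (fun i => lam i • ((1 : ℝ) ⊗ₜ[ℚ] x i : ℝ ⊗[ℚ] P))
      (fun i hi => by beta_reduce; rw [hzero i hi, zero_smul])
  have hb : ((1:ℝ) ⊗ₜ[ℚ] b : ℝ ⊗[ℚ] (Fin m → ℚ))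
      = ∑ i : {i : Fin r // 0 < lam i},
        lam0 i • ((1:ℝ) ⊗ₜ[ℚ] (fun j => A i.1 j) : ℝ ⊗[ℚ] (Fin m → ℚ)) := by
    apply (TensorProduct.piScalarRight ℚ ℝ ℝ (Fin m)).injective
    rw [map_sum]
    funext j
    rw [Finset.sum_apply]
    simp only [map_smul, Pi.smul_apply, TensorProduct.piScalarRight_apply,
      TensorProduct.piScalarRightHom_tmul, Rat.smul_one_eq_cast, smul_eq_mul]
    exact (hAsub j).symm
  -- combine into the product space
  have hsplit : ∀ (u : Fin m → ℚ) (v : P),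
      ((1:ℝ) ⊗ₜ[ℚ] ((u, v) : (Fin m → ℚ) × P) : ℝ ⊗[ℚ] ((Fin m → ℚ) × P))
      = (LinearMap.inl ℚ (Fin m → ℚ) P).baseChange ℝ ((1:ℝ) ⊗ₜ[ℚ] u)
        + (LinearMap.inr ℚ (Fin m → ℚ) P).baseChange ℝ ((1:ℝ) ⊗ₜ[ℚ] v) := by
    intro u v
    rw [LinearMap.baseChange_tmul, LinearMap.baseChange_tmul, ← tmul_add]
    congr 1
    simp
  have hp' : ((1:ℝ) ⊗ₜ[ℚ] ((b, p) : (Fin m → ℚ) × P) : ℝ ⊗[ℚ] ((Fin m → ℚ) × P))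
      = ∑ i : {i : Fin r // 0 < lam i},
        lam0 i • ((1:ℝ) ⊗ₜ[ℚ] F i : ℝ ⊗[ℚ] ((Fin m → ℚ) × P)) := by
    rw [hsplit b p, hb, hpsub, map_sum, map_sum]
    simp only [map_smul]
    rw [← Finset.sum_add_distrib]
    apply Finset.sum_congr rfl
    intro i _
    rw [← smul_add, ← hsplit]
  obtain ⟨c, hcpos, hceq⟩ := core F (b, p) lam0 (fun i => i.2) hp'
  refine ⟨fun i => if h : 0 < lam i then c ⟨i, h⟩ else 0, ?_, ?_, ?_, ?_⟩
  · intro i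
    beta_reduce
    by_cases h : 0 < lam i
    · rw [dif_pos h]; exact (hcpos _).le
    · rw [dif_neg h]
  · intro h i
    beta_reduce
    rw [dif_pos (h i)]
    exact hcpos _
  · have h2 := congrArg Prod.snd hceq
    rw [Prod.snd_sum] at h2
    simp only [hF, Prod.smul_mk] at h2
    rw [sum_subtype_of_zero (fun i => 0 < lam i)
      (fun i => (if h : 0 < lam i then c ⟨i, h⟩ else 0) • x i)
      (fun i hi => by beta_reduce; rw [dif_neg hi, zero_smul])]
    rw [h2]
    apply Finset.sum_congr rfl
    intro i _
    rw [dif_pos i.2]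
  · intro j
    have h1 := congrFun (congrArg Prod.fst hceq) j
    rw [Prod.fst_sum] at h1
    simp only [hF, Prod.smul_mk, Finset.sum_apply, Pi.smul_apply, smul_eq_mul] at h1
    rw [sum_subtype_of_zero (fun i => 0 < lam i)
      (fun i => (if h : 0 < lam i then c ⟨i, h⟩ else 0) * A i j)
      (fun i hi => by beta_reduce; rw [dif_neg hi, zero_mul])]
    rw [Finset.sum_congr rfl (fun (i : {i : Fin r // 0 < lam i}) _ => by
      rw [dif_pos i.2] :
      ∀ i ∈ Finset.univ, (if h : 0 < lam i.1 then c ⟨i.1, h⟩ else 0) * A i.1 j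
        = c i * A i.1 j)]
    exact h1.symm
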